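/- Let h : ℝ^q → ℝ be differentiable with H-Lipschitz gradient and let ρ > 2H. Define for sequences z^k, y^k with y^k = ∇h(z^k) for all k the quantity D_k = h(z^k) - h(z^{k+1}) + ⟨∇h(z^{k+1}), z^{k+1} - z^k⟩ + (ρ/2)‖z^{k+1} - z^k‖² - (1/ρ)‖y^{k+1} - y^k‖². Then D_k ≥ C₁‖z^{k+1} - z^k‖² where C₁ = ρ/2 - H/2 - H²/ρ > 0. -/

import Mathlib

open RealInnerProductSpace

open intervalIntegral in
/-- Descent lemma: a function with `H`-Lipschitz gradient satisfies
`|h b - h a - ⟪∇h a, b - a⟫| ≤ H/2 ‖b - a‖²`. -/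
lemma abs_descent {q : ℕ} (h : EuclideanSpace ℝ (Fin q) → ℝ) (H : ℝ) (hH : 0 ≤ H)
    (hdiff : Differentiable ℝ h)
    (hlip : ∀ z z', ‖gradient h z - gradient h z'‖ ≤ H * ‖z - z'‖)
    (a b : EuclideanSpace ℝ (Fin q)) :
    |h b - h a - ⟪gradient h a, b - a⟫| ≤ H / 2 * ‖b - a‖ ^ 2 := by
  set v := b - a with hv
  set c : ℝ → EuclideanSpace ℝ (Fin q) := fun t => a + t • v with hc
  have hgradcont : Continuous (gradient h) := by
    refine LipschitzWith.continuous (K := H.toNNReal) ?_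
    refine LipschitzWith.of_dist_le_mul fun x y => ?_
    simpa [dist_eq_norm, Real.coe_toNNReal _ hH] using hlip x y
  have hccont : Continuous c := by continuity
  have hderiv : ∀ t : ℝ, HasDerivAt (fun s => h (c s))
      (⟪gradient h (c t), v⟫) t := by
    intro t
    have h1 : HasDerivAt c v t := by
      simpa [hc] using ((hasDerivAt_id t).smul_const v).const_add a
    have h2 : HasFDerivAt h ((InnerProductSpace.toDual ℝ _) (gradient h (c t))) (c t) :=
      (hdiff (c t)).hasGradientAt
    have h3 := h2.comp_hasDerivAt t h1
    simp only [InnerProductSpace.toDual_apply_apply] at h3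
    exact h3
  have hgcont : Continuous fun t : ℝ => ⟪gradient h (c t), v⟫ :=
    ((hgradcont.comp hccont).inner continuous_const)
  have hftc : h b - h a = ∫ t in (0:ℝ)..1, ⟪gradient h (c t), v⟫ := by
    have := integral_eq_sub_of_hasDerivAt (f := fun s => h (c s))
      (f' := fun t => ⟪gradient h (c t), v⟫) (a := 0) (b := 1)
      (fun t _ => hderiv t) (hgcont.intervalIntegrable 0 1)
    have hc0 : c 0 = a := by simp [hc]
    have hc1 : c 1 = b := by simp [hc, hv]
    simpa only [hc1, hc0] using this.symm
  have hconst : ⟪gradient h a, v⟫ = ∫ _t in (0:ℝ)..1, ⟪gradient h a, v⟫ := by simp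
  have key : h b - h a - ⟪gradient h a, v⟫
      = ∫ t in (0:ℝ)..1, (⟪gradient h (c t), v⟫ - ⟪gradient h a, v⟫) := by
    rw [hftc, hconst, ← intervalIntegral.integral_sub
      (hgcont.intervalIntegrable 0 1) (intervalIntegrable_const)]
    simp
  rw [key]
  have hbound : ∀ t ∈ Set.Icc (0:ℝ) 1,
      ‖⟪gradient h (c t), v⟫ - ⟪gradient h a, v⟫‖ ≤ H * ‖v‖ ^ 2 * t := by
    intro t ht
    have := abs_real_inner_le_norm (gradient h (c t) - gradient h a) v
    rw [inner_sub_left] at this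
    rw [Real.norm_eq_abs]
    have h2 : ‖gradient h (c t) - gradient h a‖ ≤ H * (t * ‖v‖) := by
      have := hlip (c t) a
      simpa [hc, norm_smul, abs_of_nonneg ht.1] using this
    calc ‖⟪gradient h (c t), v⟫ - ⟪gradient h a, v⟫‖
        ≤ ‖gradient h (c t) - gradient h a‖ * ‖v‖ := this
      _ ≤ H * (t * ‖v‖) * ‖v‖ := by
          exact mul_le_mul_of_nonneg_right h2 (norm_nonneg v)
      _ = H * ‖v‖ ^ 2 * t := by ring
  have habs : ‖∫ t in (0:ℝ)..1, (⟪gradient h (c t), v⟫ - ⟪gradient h a, v⟫)‖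
      ≤ |∫ t in (0:ℝ)..1, H * ‖v‖ ^ 2 * t| := by
    refine intervalIntegral.norm_integral_le_abs_of_norm_le
      (g := fun t => H * ‖v‖ ^ 2 * t) ?_ ?_
    · filter_upwards [MeasureTheory.ae_restrict_mem measurableSet_Ioc] with t ht
      refine hbound t ⟨?_, ?_⟩
      · have := ht.1; simp at this; linarith
      · have := ht.2; simpa using this
    · exact (continuous_const.mul continuous_id).intervalIntegrable 0 1
  have hint : ∫ t in (0:ℝ)..1, H * ‖v‖ ^ 2 * t = H / 2 * ‖v‖ ^ 2 := by
    rw [intervalIntegral.integral_const_mul, integral_id]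
    ring
  rw [hint, abs_of_nonneg (by positivity)] at habs
  rw [← Real.norm_eq_abs]
  exact habs

/-- Sufficient descent in the z- and y-updates of miADMM (Lemma A.4). -/
theorem z_y_sufficient_descent {q : ℕ} (h : EuclideanSpace ℝ (Fin q) → ℝ) (H ρ : ℝ)
    (hH : 0 ≤ H) (hρ : ρ > 2 * H)
    (hdiff : Differentiable ℝ h)
    (hlip : ∀ z z', ‖gradient h z - gradient h z'‖ ≤ H * ‖z - z'‖)
    (z y : ℕ → EuclideanSpace ℝ (Fin q))
    (hy : ∀ k, y k = gradient h (z k)) :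
    ∀ k : ℕ,
      h (z k) - h (z (k + 1)) + ⟪gradient h (z (k + 1)), z (k + 1) - z k⟫ +
          (ρ / 2) * ‖z (k + 1) - z k‖ ^ 2 - (1 / ρ) * ‖y (k + 1) - y k‖ ^ 2 ≥
        (ρ / 2 - H / 2 - H ^ 2 / ρ) * ‖z (k + 1) - z k‖ ^ 2 := by
  intro k
  have hρ0 : 0 < ρ := by linarith
  set a := z (k + 1)
  set b := z k
  have hd := abs_descent h H hH hdiff hlip a b
  have hinner : ⟪gradient h a, a - b⟫ = -⟪gradient h a, b - a⟫ := by
    rw [← inner_neg_right]; congr 1; abel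
  have hnormsym : ‖b - a‖ = ‖a - b‖ := norm_sub_rev b a
  have hylip : ‖y (k + 1) - y k‖ ≤ H * ‖a - b‖ := by
    rw [hy, hy]; exact hlip (z (k + 1)) (z k)
  have hysq : ‖y (k + 1) - y k‖ ^ 2 ≤ H ^ 2 * ‖a - b‖ ^ 2 := by
    nlinarith [norm_nonneg (y (k + 1) - y k), norm_nonneg (a - b)]
  have h1 : h b - h a + ⟪gradient h a, a - b⟫ ≥ -(H / 2 * ‖a - b‖ ^ 2) := by
    rw [hinner]
    have := abs_le.mp hd
    rw [hnormsym] at this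
    linarith [this.1]
  have h2 : (1 / ρ) * ‖y (k + 1) - y k‖ ^ 2 ≤ (H ^ 2 / ρ) * ‖a - b‖ ^ 2 := by
    have hstep : (1 / ρ) * ‖y (k + 1) - y k‖ ^ 2 ≤ (1 / ρ) * (H ^ 2 * ‖a - b‖ ^ 2) :=
      mul_le_mul_of_nonneg_left hysq (by positivity)
    calc (1 / ρ) * ‖y (k + 1) - y k‖ ^ 2 ≤ (1 / ρ) * (H ^ 2 * ‖a - b‖ ^ 2) := hstep
      _ = (H ^ 2 / ρ) * ‖a - b‖ ^ 2 := by ring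
  linarith
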